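/- For every α, β ∈ [0,1), every S ≤ s ≤ t ≤ T with u = (s+t)/2, one has (u−S)^{−α}(T−u)^{−β}(t−s) ≤ 2^{1+α} ∫_s^t (r−S)^{−α}(T−r)^{−β} dr. -/

import Mathlib

open MeasureTheory

/-- For every `α, β ∈ [0,1)`, every `S < s ≤ t < T` with `u = (s+t)/2`, one has
`(u−S)^(−α) * (T−u)^(−β) * (t−s) ≤ 2^(1+α) * ∫_s^t (r−S)^(−α) * (T−r)^(−β) dr`. -/
theorem midpoint_weight_integral_bound
    (α β S s t T : ℝ) (hα0 : 0 ≤ α) (hα1 : α < 1) (hβ0 : 0 ≤ β) (hβ1 : β < 1)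
    (hSs : S < s) (hst : s ≤ t) (htT : t < T) :
    ((s + t) / 2 - S) ^ (-α) * (T - (s + t) / 2) ^ (-β) * (t - s) ≤
      (2 : ℝ) ^ (1 + α) * ∫ r in s..t, (r - S) ^ (-α) * (T - r) ^ (-β) := by
  set u : ℝ := (s + t) / 2 with hu
  have hSu : S < u := by rw [hu]; linarith
  have huT : u < T := by rw [hu]; linarith
  have hsu : s ≤ u := by rw [hu]; linarith
  have hut : u ≤ t := by rw [hu]; linarith
  set f : ℝ → ℝ := fun r => (r - S) ^ (-α) * (T - r) ^ (-β) with hf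
  have hcont : ContinuousOn f (Set.uIcc s t) := by
    rw [Set.uIcc_of_le hst]
    apply ContinuousOn.mul
    · apply ContinuousOn.rpow_const (continuous_id.sub continuous_const).continuousOn
      intro x hx; left; have := hx.1; simp only [Pi.sub_apply, id_eq]; intro h; nlinarith
    · apply ContinuousOn.rpow_const (continuous_const.sub continuous_id).continuousOn
      intro x hx; left; have := hx.2; simp only [Pi.sub_apply, id_eq]; intro h; nlinarith
  have hint : IntervalIntegrable f volume s t := hcont.intervalIntegrable
  have hsub1 : Set.uIcc s u ⊆ Set.uIcc s t := by
    rw [Set.uIcc_of_le hst, Set.uIcc_of_le hsu]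
    exact Set.Icc_subset_Icc le_rfl hut
  have hsub2 : Set.uIcc u t ⊆ Set.uIcc s t := by
    rw [Set.uIcc_of_le hst, Set.uIcc_of_le hut]
    exact Set.Icc_subset_Icc hsu le_rfl
  have hint1 : IntervalIntegrable f volume s u := hint.mono_set hsub1
  have hint2 : IntervalIntegrable f volume u t := hint.mono_set hsub2
  have hsplit : (∫ r in s..u, f r) + (∫ r in u..t, f r) = ∫ r in s..t, f r :=
    intervalIntegral.integral_add_adjacent_intervals hint1 hint2
  -- left half is nonnegative
  have h1 : 0 ≤ ∫ r in s..u, f r := by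
    apply intervalIntegral.integral_nonneg hsu
    intro x hx
    have hx1 : S < x := lt_of_lt_of_le hSs hx.1
    have hx2 : x < T := lt_of_le_of_lt (hx.2.trans hut) htT
    exact mul_nonneg (Real.rpow_nonneg (by linarith) _) (Real.rpow_nonneg (by linarith) _)
  -- pointwise lower bound on the right half
  set c : ℝ := (2 * (u - S)) ^ (-α) * (T - u) ^ (-β) with hc
  have h2 : ∀ x ∈ Set.Icc u t, c ≤ f x := by
    intro x hx
    have hx1 : S < x := lt_of_lt_of_le hSu hx.1
    have hx2 : x ≤ t := hx.2
    have hb1 : (2 * (u - S)) ^ (-α) ≤ (x - S) ^ (-α) := by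
      apply Real.rpow_le_rpow_of_nonpos (by linarith) (by linarith) (by linarith)
    have hb2 : (T - u) ^ (-β) ≤ (T - x) ^ (-β) := by
      apply Real.rpow_le_rpow_of_nonpos (by linarith [hx2.trans_lt htT]) (by linarith [hx.1])
        (by linarith)
    exact mul_le_mul hb1 hb2 (Real.rpow_nonneg (by linarith) _)
      (Real.rpow_nonneg (by linarith [hx1]) _)
  have h3 : c * (t - u) ≤ ∫ r in u..t, f r := by
    have := intervalIntegral.integral_mono_on hut intervalIntegrable_const hint2 h2
    rwa [intervalIntegral.integral_const, smul_eq_mul, mul_comm] at this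
  -- combine
  have hI : c * (t - u) ≤ ∫ r in s..t, f r := by
    rw [← hsplit]; linarith
  have hpow : (2:ℝ) ^ (1 + α) * (2:ℝ) ^ (-α) = 2 := by
    rw [← Real.rpow_add (by norm_num)]; norm_num
  have hmul : (2 * (u - S)) ^ (-α) = (2:ℝ) ^ (-α) * (u - S) ^ (-α) :=
    Real.mul_rpow (by norm_num) (by linarith)
  have h2pos : (0:ℝ) < (2:ℝ) ^ (1 + α) := Real.rpow_pos_of_pos (by norm_num) _
  calc (u - S) ^ (-α) * (T - u) ^ (-β) * (t - s)
      = (2:ℝ) ^ (1 + α) * (c * (t - u)) := by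
        rw [hc, hmul]
        have htu : t - u = (t - s) / 2 := by rw [hu]; ring
        rw [htu]
        have hw : (0:ℝ) ≤ (u - S) ^ (-α) * (T - u) ^ (-β) :=
          mul_nonneg (Real.rpow_nonneg (by linarith) _) (Real.rpow_nonneg (by linarith) _)
        linear_combination (-((u - S) ^ (-α) * (T - u) ^ (-β) * (t - s) / 2)) * hpow
    _ ≤ (2:ℝ) ^ (1 + α) * ∫ r in s..t, f r := by
        exact mul_le_mul_of_nonneg_left hI (le_of_lt h2pos)
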